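/- Let γ = 1/k for a positive integer k, and let u, φ satisfy 0 ≤ u(z) ≤ φ(z) ≤ 1 at two points x, y, with φ(x), φ(y) > 0. Suppose |u(x) − u(y)| ≥ 4|φ(x) − φ(y)| and u^{γ+1}(y)/φ^γ(y) − u^{γ+1}(x)/φ^γ(x) ≥ 0. Then (2/5)·(4/5)^γ · ((u−φ)₋(x) − (u−φ)₋(y))^{1+γ} ≤ u^{γ+1}(y)/φ^γ(y) − u^{γ+1}(x)/φ^γ(x) ≤ (14/3)·((u−φ)₋(x) − (u−φ)₋(y)), and in particular (u−φ)₋(x) − (u−φ)₋(y) ≥ 0. -/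

import Mathlib

open Real

lemma aux_rpow_succ {x s : ℝ} (hx : 0 ≤ x) (hs : 0 < s) : x ^ (s + 1) = x * x ^ s := by
  rcases eq_or_lt_of_le hx with h | h
  · rw [← h, Real.zero_rpow (by positivity : s + 1 ≠ 0), Real.zero_rpow (ne_of_gt hs), mul_zero]
  · rw [Real.rpow_add_one (ne_of_gt h)]; ring

lemma aux_tangent {s : ℝ} (hs : 0 < s) {t u : ℝ} (ht : 0 ≤ t) (hu : 0 ≤ u) :
    t ^ (s + 1) + (1 + s) * t ^ s * (u - t) ≤ u ^ (s + 1) := by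
  rcases eq_or_lt_of_le ht with h | h
  · rw [← h, Real.zero_rpow (by positivity : s + 1 ≠ 0), Real.zero_rpow (ne_of_gt hs)]
    simpa using Real.rpow_nonneg hu (s + 1)
  · have hz : (-1 : ℝ) ≤ (u - t) / t := by
      rw [le_div_iff₀ h]; linarith
    have hben := one_add_mul_self_le_rpow_one_add hz (by linarith : (1:ℝ) ≤ s + 1)
    have h1 : 1 + (u - t) / t = u / t := by field_simp; ring
    rw [h1, Real.div_rpow hu ht] at hben
    have hpos : (0:ℝ) < t ^ (s + 1) := Real.rpow_pos_of_pos h _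
    have h2 := mul_le_mul_of_nonneg_right hben hpos.le
    rw [div_mul_cancel₀ _ (ne_of_gt hpos)] at h2
    have e : (1 + (s + 1) * ((u - t) / t)) * t ^ (s + 1)
        = t ^ (s + 1) + (1 + s) * t ^ s * (u - t) := by
      rw [aux_rpow_succ ht hs]; field_simp; ring
    linarith [e ▸ h2]

lemma aux_chord {s : ℝ} (hs0 : 0 < s) (hs1 : s ≤ 1) {t u : ℝ} (ht : 0 < t) (htu : t ≤ u) :
    u ^ s ≤ t ^ s * (1 + s * ((u - t) / t)) := by
  have hz : (-1 : ℝ) ≤ (u - t) / t := le_trans (by norm_num) (div_nonneg (by linarith) ht.le)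
  have hben := rpow_one_add_le_one_add_mul_self hz hs0.le hs1
  have h1 : 1 + (u - t) / t = u / t := by field_simp; ring
  rw [h1, Real.div_rpow (le_trans ht.le htu) ht.le] at hben
  have hpos : (0:ℝ) < t ^ s := Real.rpow_pos_of_pos ht _
  calc u ^ s = u ^ s / t ^ s * t ^ s := by field_simp
    _ ≤ (1 + s * ((u - t) / t)) * t ^ s := mul_le_mul_of_nonneg_right hben hpos.le
    _ = t ^ s * (1 + s * ((u - t) / t)) := mul_comm _ _

lemma aux_step1 {γ ux uy px py : ℝ} (hγ0 : 0 < γ) (hux0 : 0 ≤ ux) (huxp : ux ≤ px)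
    (hpx0 : 0 < px) (huy0 : 0 ≤ uy) (hpy0 : 0 < py)
    (hfar : 4 * |px - py| ≤ |ux - uy|)
    (hsign : 0 ≤ uy ^ (γ + 1) / py ^ γ - ux ^ (γ + 1) / px ^ γ) : ux ≤ uy := by
  by_contra hc
  push_neg at hc
  have hd : 0 < ux - uy := by linarith
  have habs : |ux - uy| = ux - uy := abs_of_pos hd
  have hpq : px - py ≤ (ux - uy) / 4 := by
    have h := le_abs_self (px - py); rw [habs] at hfar; linarith
  have hP : (0:ℝ) < px ^ γ := Real.rpow_pos_of_pos hpx0 _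
  have hQ : (0:ℝ) < py ^ γ := Real.rpow_pos_of_pos hpy0 _
  have h1 : uy * px < ux * py := by
    nlinarith [mul_le_mul_of_nonneg_left hpq hux0,
      mul_le_mul_of_nonneg_right huxp (show (0:ℝ) ≤ (ux - uy)/4 by linarith),
      mul_pos hd hpx0]
  have h2 : (uy * px) ^ γ ≤ (ux * py) ^ γ :=
    Real.rpow_le_rpow (by positivity) h1.le hγ0.le
  have e3 : uy ^ (γ + 1) * px ^ γ = uy * (uy * px) ^ γ := by
    rw [aux_rpow_succ huy0 hγ0, Real.mul_rpow huy0 hpx0.le]; ring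
  have e4 : ux ^ (γ + 1) * py ^ γ = ux * (ux * py) ^ γ := by
    rw [aux_rpow_succ hux0 hγ0, Real.mul_rpow hux0 hpy0.le]; ring
  have hxpos : 0 < ux := by linarith
  have h5 : (0:ℝ) < (ux * py) ^ γ := Real.rpow_pos_of_pos (mul_pos hxpos hpy0) _
  have key : uy ^ (γ + 1) * px ^ γ < ux ^ (γ + 1) * py ^ γ := by
    rw [e3, e4]
    nlinarith [mul_le_mul_of_nonneg_left h2 huy0, mul_pos (sub_pos.mpr hc) h5]
  have : uy ^ (γ + 1) / py ^ γ < ux ^ (γ + 1) / px ^ γ := by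
    rw [div_lt_div_iff₀ hQ hP]; exact key
  linarith
set_option maxHeartbeats 1000000 in
theorem stmt_13 (k : ℕ) (hk : 0 < k) (γ : ℝ) (hγ : γ = 1 / (k : ℝ))
    (ux uy px py : ℝ)
    (hux0 : 0 ≤ ux) (huxp : ux ≤ px) (hpx1 : px ≤ 1) (hpx0 : 0 < px)
    (huy0 : 0 ≤ uy) (huyp : uy ≤ py) (hpy1 : py ≤ 1) (hpy0 : 0 < py)
    (hfar : 4 * |px - py| ≤ |ux - uy|)
    (hsign : 0 ≤ uy ^ (γ + 1) / py ^ γ - ux ^ (γ + 1) / px ^ γ) :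
    (2 / 5) * (4 / 5) ^ γ * ((px - ux) - (py - uy)) ^ (1 + γ)
        ≤ uy ^ (γ + 1) / py ^ γ - ux ^ (γ + 1) / px ^ γ ∧
    uy ^ (γ + 1) / py ^ γ - ux ^ (γ + 1) / px ^ γ
        ≤ (14 / 3) * ((px - ux) - (py - uy)) ∧
    0 ≤ (px - ux) - (py - uy) := by
  have hk1 : (1:ℝ) ≤ (k:ℝ) := by exact_mod_cast hk
  have hγ0 : 0 < γ := by rw [hγ]; positivity
  have hγ1 : γ ≤ 1 := by rw [hγ]; exact (div_le_one (by positivity)).mpr hk1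
  have hab : ux ≤ uy := aux_step1 hγ0 hux0 huxp hpx0 huy0 hpy0 hfar hsign
  have hd0 : (0:ℝ) ≤ uy - ux := by linarith
  have habs : |ux - uy| = uy - ux := by rw [abs_sub_comm, abs_of_nonneg hd0]
  rw [habs] at hfar
  have he1 : px - py ≤ (uy - ux) / 4 := by have := le_abs_self (px - py); linarith
  have he2 : py - px ≤ (uy - ux) / 4 := by have := neg_abs_le (px - py); linarith
  have hδ1 : 3/4 * (uy - ux) ≤ (px - ux) - (py - uy) := by linarith
  have hδ2 : (px - ux) - (py - uy) ≤ 5/4 * (uy - ux) := by linarith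
  have hδ0 : 0 ≤ (px - ux) - (py - uy) := by linarith
  have hP : (0:ℝ) < px ^ γ := Real.rpow_pos_of_pos hpx0 _
  have hQ : (0:ℝ) < py ^ γ := Real.rpow_pos_of_pos hpy0 _
  have hQ1 : py ^ γ ≤ 1 := Real.rpow_le_one hpy0.le hpy1 hγ0.le
  have hAs0 : (0:ℝ) ≤ ux ^ γ := Real.rpow_nonneg hux0 _
  have hBs0 : (0:ℝ) ≤ uy ^ γ := Real.rpow_nonneg huy0 _
  have hDs0 : (0:ℝ) ≤ (uy - ux) ^ γ := Real.rpow_nonneg hd0 _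
  have hAsP : ux ^ γ ≤ px ^ γ := Real.rpow_le_rpow hux0 huxp hγ0.le
  have hBsQ : uy ^ γ ≤ py ^ γ := Real.rpow_le_rpow huy0 huyp hγ0.le
  have hAsBs : ux ^ γ ≤ uy ^ γ := Real.rpow_le_rpow hux0 hab hγ0.le
  have hDsBs : (uy - ux) ^ γ ≤ uy ^ γ := Real.rpow_le_rpow hd0 (by linarith) hγ0.le
  have eA : ux ^ (γ + 1) = ux * ux ^ γ := aux_rpow_succ hux0 hγ0
  have eB : uy ^ (γ + 1) = uy * uy ^ γ := aux_rpow_succ huy0 hγ0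
  have eD : (uy - ux) ^ (γ + 1) = (uy - ux) * (uy - ux) ^ γ := aux_rpow_succ hd0 hγ0
  have hDPQ : (uy ^ (γ + 1) / py ^ γ - ux ^ (γ + 1) / px ^ γ) * (px ^ γ * py ^ γ)
      = (uy * uy ^ γ) * px ^ γ - (ux * ux ^ γ) * py ^ γ := by
    rw [eA, eB]; field_simp
  -- B1
  have B1 : uy * uy ^ γ - ux * ux ^ γ ≤ (1 + γ) * (uy - ux) * uy ^ γ := by
    have h := aux_tangent hγ0 huy0 hux0
    rw [eA, eB] at h
    linarith [h]
  -- B2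
  have B2 : ux * ux ^ γ + (uy - ux) * (uy - ux) ^ γ ≤ uy * uy ^ γ := by
    linarith [mul_le_mul_of_nonneg_left hAsBs hux0, mul_le_mul_of_nonneg_left hDsBs hd0]
  -- B3
  have B3 : ux * ux ^ γ + (1 + γ) * ux ^ γ * (uy - ux) ≤ uy * uy ^ γ := by
    have h := aux_tangent hγ0 hux0 huy0
    rw [eA, eB] at h
    exact h
  -- B4
  have B4 : (ux * ux ^ γ) * py ^ γ
      ≤ (ux * ux ^ γ) * px ^ γ + ((uy - ux) / 4) * ux ^ γ * px ^ γ := by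
    rcases le_or_gt py px with h | h
    · have hQP : py ^ γ ≤ px ^ γ := Real.rpow_le_rpow hpy0.le h hγ0.le
      linarith [mul_le_mul_of_nonneg_left hQP (mul_nonneg hux0 hAs0),
        mul_nonneg (mul_nonneg (by linarith : (0:ℝ) ≤ (uy - ux)/4) hAs0) hP.le]
    · have hch := aux_chord hγ0 hγ1 hpx0 h.le
      have h0 : 0 ≤ ux * ux ^ γ := mul_nonneg hux0 hAs0
      have h1 : (ux * ux ^ γ) * py ^ γ
          ≤ (ux * ux ^ γ) * (px ^ γ * (1 + γ * ((py - px) / px))) :=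
        mul_le_mul_of_nonneg_left hch h0
      have h2 : (ux * ux ^ γ) * (px ^ γ * (1 + γ * ((py - px) / px)))
          = (ux * ux ^ γ) * px ^ γ + (ux / px) * (ux ^ γ * px ^ γ * (γ * (py - px))) := by
        field_simp
      have h3 : (ux / px) * (ux ^ γ * px ^ γ * (γ * (py - px)))
          ≤ 1 * (ux ^ γ * px ^ γ * ((uy - ux) / 4)) := by
        apply mul_le_mul
        · rw [div_le_one hpx0]; exact huxp
        · have hgp : γ * (py - px) ≤ (uy - ux) / 4 := by nlinarith
          exact mul_le_mul_of_nonneg_left hgp (mul_nonneg hAs0 hP.le)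
        · exact mul_nonneg (mul_nonneg hAs0 hP.le) (mul_nonneg hγ0.le (by linarith))
        · norm_num
      linarith [h1, h2, h3]
  -- base lower bound
  have hbase : uy * uy ^ γ - ux * ux ^ γ - ((uy - ux) / 4) * ux ^ γ
      ≤ uy ^ (γ + 1) / py ^ γ - ux ^ (γ + 1) / px ^ γ := by
    have hQD : py ^ γ * (uy ^ (γ + 1) / py ^ γ - ux ^ (γ + 1) / px ^ γ)
        = uy * uy ^ γ - (ux * ux ^ γ) * py ^ γ / px ^ γ := by
      rw [eA, eB]; field_simp
    have h4 : (ux * ux ^ γ) * py ^ γ / px ^ γ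
        ≤ ux * ux ^ γ + ((uy - ux) / 4) * ux ^ γ := by
      rw [div_le_iff₀ hP]; linarith [B4]
    have h5 : py ^ γ * (uy ^ (γ + 1) / py ^ γ - ux ^ (γ + 1) / px ^ γ)
        ≤ uy ^ (γ + 1) / py ^ γ - ux ^ (γ + 1) / px ^ γ := by
      linarith [mul_nonneg (sub_nonneg.mpr hQ1) hsign]
    linarith
  have hlow : 1/2 * ((uy - ux) * (uy - ux) ^ γ)
      ≤ uy ^ (γ + 1) / py ^ γ - ux ^ (γ + 1) / px ^ γ := by
    rcases le_or_gt (ux ^ γ) (2 * (uy - ux) ^ γ) with h | h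
    · linarith [hbase, B2,
        mul_le_mul_of_nonneg_left h (show (0:ℝ) ≤ (uy - ux)/4 by linarith)]
    · linarith [hbase, B3, mul_le_mul_of_nonneg_right h.le hd0,
        mul_nonneg (mul_nonneg hγ0.le hAs0) hd0, mul_nonneg hd0 hDs0]
  refine ⟨?_, ?_, hδ0⟩
  · -- lower bound
    have hpow : ((px - ux) - (py - uy)) ^ (1 + γ)
        ≤ (5/4 : ℝ) ^ (γ + 1) * (uy - ux) ^ (γ + 1) := by
      rw [add_comm 1 γ]
      calc ((px - ux) - (py - uy)) ^ (γ + 1) ≤ ((5/4 : ℝ) * (uy - ux)) ^ (γ + 1) :=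
            Real.rpow_le_rpow hδ0 (by linarith) (by linarith)
        _ = (5/4 : ℝ) ^ (γ + 1) * (uy - ux) ^ (γ + 1) := Real.mul_rpow (by norm_num) hd0
    have hconst : (2/5 : ℝ) * (4/5 : ℝ) ^ γ * (5/4 : ℝ) ^ (γ + 1) = 1/2 := by
      rw [Real.rpow_add_one (by norm_num : (5/4 : ℝ) ≠ 0)]
      have h45 : (4/5 : ℝ) ^ γ * (5/4 : ℝ) ^ γ = 1 := by
        rw [← Real.mul_rpow (by norm_num) (by norm_num)]
        norm_num
      linear_combination (1/2 : ℝ) * h45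
    have hfin : (2/5 : ℝ) * (4/5 : ℝ) ^ γ * ((px - ux) - (py - uy)) ^ (1 + γ)
        ≤ 1/2 * ((uy - ux) * (uy - ux) ^ γ) := by
      calc (2/5 : ℝ) * (4/5 : ℝ) ^ γ * ((px - ux) - (py - uy)) ^ (1 + γ)
          ≤ (2/5 : ℝ) * (4/5 : ℝ) ^ γ * ((5/4 : ℝ) ^ (γ + 1) * (uy - ux) ^ (γ + 1)) := by
            apply mul_le_mul_of_nonneg_left hpow
            positivity
        _ = (1/2 : ℝ) * (uy - ux) ^ (γ + 1) := by linear_combination (uy - ux) ^ (γ+1) * hconst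
        _ = 1/2 * ((uy - ux) * (uy - ux) ^ γ) := by rw [eD]
    exact le_trans hfin hlow
  · -- upper bound
    have t1 : (uy * uy ^ γ - ux * ux ^ γ) * px ^ γ
        ≤ ((1 + γ) * (uy - ux)) * (px ^ γ * py ^ γ) := by
      have h1 := mul_le_mul_of_nonneg_right B1 hP.le
      linarith [h1, mul_le_mul_of_nonneg_left hBsQ (mul_nonneg
        (mul_nonneg (by linarith : (0:ℝ) ≤ 1 + γ) hd0) hP.le)]
    have t2 : (ux * ux ^ γ) * (px ^ γ - py ^ γ)
        ≤ ((uy - ux) / 4) * (px ^ γ * py ^ γ) := by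
      rcases le_or_gt px py with h | h
      · have hPQ : px ^ γ ≤ py ^ γ := Real.rpow_le_rpow hpx0.le h hγ0.le
        linarith [mul_le_mul_of_nonneg_left hPQ (mul_nonneg hux0 hAs0),
          mul_nonneg (show (0:ℝ) ≤ (uy - ux)/4 by linarith) (mul_pos hP hQ).le]
      · have hch := aux_chord hγ0 hγ1 hpy0 h.le
        have h0 : 0 ≤ ux * ux ^ γ := mul_nonneg hux0 hAs0
        have h1 : (ux * ux ^ γ) * px ^ γ
            ≤ (ux * ux ^ γ) * (py ^ γ * (1 + γ * ((px - py) / py))) :=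
          mul_le_mul_of_nonneg_left hch h0
        have h2 : (ux * ux ^ γ) * (py ^ γ * (1 + γ * ((px - py) / py)))
            = (ux * ux ^ γ) * py ^ γ + (ux / py) * (ux ^ γ * py ^ γ * (γ * (px - py))) := by
          field_simp
        have huxpy : ux ≤ py := le_trans hab huyp
        have h3 : (ux / py) * (ux ^ γ * py ^ γ * (γ * (px - py)))
            ≤ 1 * (ux ^ γ * py ^ γ * ((uy - ux) / 4)) := by
          apply mul_le_mul
          · rw [div_le_one hpy0]; exact huxpy
          · have hgp : γ * (px - py) ≤ (uy - ux) / 4 := by nlinarith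
            exact mul_le_mul_of_nonneg_left hgp (mul_nonneg hAs0 hQ.le)
          · exact mul_nonneg (mul_nonneg hAs0 hQ.le) (mul_nonneg hγ0.le (by linarith))
          · norm_num
        have h4 : ux ^ γ * py ^ γ ≤ px ^ γ * py ^ γ := mul_le_mul_of_nonneg_right hAsP hQ.le
        linarith [h1, h2, h3,
          mul_le_mul_of_nonneg_left h4 (show (0:ℝ) ≤ (uy - ux)/4 by linarith)]
    have hupper : (uy ^ (γ + 1) / py ^ γ - ux ^ (γ + 1) / px ^ γ) * (px ^ γ * py ^ γ)
        ≤ (9/4 * (uy - ux)) * (px ^ γ * py ^ γ) := by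
      linarith [hDPQ, t1, t2,
        mul_le_mul_of_nonneg_right (show (1:ℝ) + γ ≤ 2 by linarith)
          (mul_nonneg hd0 (mul_pos hP hQ).le)]
    have hD9 : uy ^ (γ + 1) / py ^ γ - ux ^ (γ + 1) / px ^ γ ≤ 9/4 * (uy - ux) :=
      le_of_mul_le_mul_right hupper (mul_pos hP hQ)
    linarith
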